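/- Let f : ℝⁿ → ℝ be convex and μ-smooth, λ > 0, S a d×m matrix, z* and y* the plain and sketched dual solutions with Δ := y* - z*, and suppose λ ≥ 2μZ_f² where Z_f = sup{‖P_S^⊥AᵀΔ'‖ : Δ' ∈ T_{z*} ∩ B₂ⁿ}. Then (λ/(2μ))‖Δ‖² + ‖AᵀΔ‖² ≤ ‖P_S^⊥AᵀΔ‖·‖P_S^⊥Aᵀz*‖, and consequently √(2λ/μ)·‖AᵀΔ‖ ≤ Z_f·‖P_S^⊥Aᵀz*‖. -/

import Mathlib

open scoped RealInnerProductSpace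
open Matrix MeasureTheory ProbabilityTheory

noncomputable section

abbrev EuclR (n : ℕ) := EuclideanSpace ℝ (Fin n)

def matVec {p q : ℕ} (M : Matrix (Fin p) (Fin q) ℝ) (x : EuclR q) : EuclR p :=
  Matrix.toEuclideanLin M x

def matCLM {p q : ℕ} (M : Matrix (Fin p) (Fin q) ℝ) : EuclR q →L[ℝ] EuclR p :=
  LinearMap.toContinuousLinearMap (Matrix.toEuclideanLin M)

def ranM {p q : ℕ} (M : Matrix (Fin p) (Fin q) ℝ) : Submodule ℝ (EuclR p) :=
  LinearMap.range (Matrix.toEuclideanLin M)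

def projOn {p : ℕ} (K : Submodule ℝ (EuclR p)) (x : EuclR p) : EuclR p :=
  (Submodule.orthogonalProjection K x : EuclR p)

def perpCLM {p : ℕ} (K : Submodule ℝ (EuclR p)) : EuclR p →L[ℝ] EuclR p :=
  ContinuousLinearMap.id ℝ (EuclR p) - K.subtypeL.comp (Submodule.orthogonalProjection K)

def fconj {p : ℕ} (f : EuclR p → ℝ) (z : EuclR p) : EReal :=
  ⨆ w : EuclR p, ((⟪w, z⟫ - f w : ℝ) : EReal)

def fdom {p : ℕ} (f : EuclR p → ℝ) : Set (EuclR p) := {z | fconj f z ≠ ⊤}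

def tcone {p : ℕ} (f : EuclR p → ℝ) (z : EuclR p) : Set (EuclR p) :=
  {Δ | ∃ t : ℝ, 0 ≤ t ∧ ∃ y ∈ fdom f, Δ = t • (y - z)}

def ZfVal {n d m : ℕ} (f : EuclR n → ℝ) (zs : EuclR n)
    (A : Matrix (Fin n) (Fin d) ℝ) (S : Matrix (Fin d) (Fin m) ℝ) : ℝ :=
  sSup ((fun Δ => ‖matVec Aᵀ Δ - projOn (ranM S) (matVec Aᵀ Δ)‖) ''
    (tcone f zs ∩ Metric.closedBall 0 1))

/-! ### Auxiliary lemmas -/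

section AuxLemmas
open Set

variable {n : ℕ} {f : EuclR n → ℝ} {μ : ℝ} {z : EuclR n}

/-- Real-valued conjugate. -/
def phiConj {p : ℕ} (f : EuclR p → ℝ) (z : EuclR p) : ℝ :=
  ⨆ w : EuclR p, (⟪w, z⟫ - f w)

lemma fconj_eq_coe (hb : BddAbove (range fun w : EuclR n => ⟪w, z⟫ - f w)) :
    fconj f z = ((phiConj f z : ℝ) : EReal) := by
  unfold fconj phiConj
  exact (Monotone.map_ciSup_of_continuousAt
    (continuous_coe_real_ereal.continuousAt)
    (fun a b h => EReal.coe_le_coe_iff.mpr h) hb).symm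

lemma fconj_eq_top (hb : ¬ BddAbove (range fun w : EuclR n => ⟪w, z⟫ - f w)) :
    fconj f z = ⊤ := by
  rw [EReal.eq_top_iff_forall_lt]
  intro y
  rw [not_bddAbove_iff] at hb
  obtain ⟨-, ⟨w, rfl⟩, hw⟩ := hb y
  exact lt_of_lt_of_le (EReal.coe_lt_coe_iff.mpr hw)
    (le_iSup (fun w : EuclR n => ((⟪w, z⟫ - f w : ℝ) : EReal)) w)

lemma bddAbove_of_fconj_ne_top (hb : fconj f z ≠ ⊤) :
    BddAbove (range fun w : EuclR n => ⟪w, z⟫ - f w) := by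
  by_contra h
  exact hb (fconj_eq_top h)

lemma grad_support (hconv : ConvexOn ℝ Set.univ f)
    (hdiff : ∀ x, HasGradientAt f (gradient f x) x) (x w : EuclR n) :
    f x + ⟪gradient f x, w - x⟫ ≤ f w := by
  set ψ : ℝ → ℝ := fun t => f (x + t • (w - x)) with hψ
  have hcurve : ∀ t : ℝ, HasDerivAt (fun s : ℝ => x + s • (w - x)) (w - x) t := by
    intro t
    simpa using ((hasDerivAt_id t).smul_const (w - x)).const_add x
  have hder : HasDerivAt ψ ⟪gradient f x, w - x⟫ 0 := by
    have h1 := (hdiff (x + (0:ℝ) • (w - x))).hasFDerivAt.comp_hasDerivAt 0 (hcurve 0)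
    simpa [hψ, InnerProductSpace.toDual_apply_apply, Function.comp_def] using h1
  have hψc : ConvexOn ℝ Set.univ ψ := by
    have h2 := hconv.comp_affineMap (AffineMap.lineMap x w : ℝ →ᵃ[ℝ] EuclR n)
    have h3 : ψ = f ∘ (AffineMap.lineMap x w : ℝ →ᵃ[ℝ] EuclR n) := by
      funext t
      show f _ = f _
      congr 1
      simp [AffineMap.lineMap_apply]
      module
    rw [h3]
    simpa using h2
  have := hψc.le_slope_of_hasDerivAt (mem_univ 0) (mem_univ 1) one_pos hder
  rw [slope_def_field] at this
  have hψ0 : ψ 0 = f x := by simp [hψ]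
  have hψ1 : ψ 1 = f w := by simp [hψ]
  rw [hψ0, hψ1] at this
  rw [show (1:ℝ) - 0 = 1 by norm_num, div_one] at this
  linarith

lemma grad_descent (hμ : 0 < μ)
    (hdiff : ∀ x, HasGradientAt f (gradient f x) x)
    (hsmooth : ∀ x y, ‖gradient f y - gradient f x‖ ≤ μ * ‖y - x‖) (x v : EuclR n) :
    f (x + v) ≤ f x + ⟪gradient f x, v⟫ + μ / 2 * ‖v‖ ^ 2 := by
  have hgc : Continuous (gradient f) := by
    have hl : LipschitzWith ⟨μ, hμ.le⟩ (gradient f) := by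
      apply LipschitzWith.of_dist_le_mul
      intro a b
      rw [dist_eq_norm, dist_eq_norm]; exact hsmooth b a
    exact hl.continuous
  have hcurve : ∀ t : ℝ, HasDerivAt (fun s : ℝ => x + s • v) v t := fun t => by
    simpa using ((hasDerivAt_id t).smul_const v).const_add x
  set d : ℝ → ℝ := fun t => ⟪gradient f (x + t • v), v⟫ with hd
  have hder : ∀ t : ℝ, HasDerivAt (fun s : ℝ => f (x + s • v)) (d t) t := by
    intro t
    have h1 := (hdiff (x + t • v)).hasFDerivAt.comp_hasDerivAt t (hcurve t)
    simpa [hd, InnerProductSpace.toDual_apply_apply, Function.comp_def] using h1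
  have hdc : Continuous d := by
    apply Continuous.inner _ continuous_const
    exact hgc.comp (by continuity)
  have hFTC : f (x + v) - f x = ∫ t in (0:ℝ)..1, d t := by
    have h2 := intervalIntegral.integral_eq_sub_of_hasDerivAt (f := fun s : ℝ => f (x + s • v))
      (fun t _ => hder t) (hdc.intervalIntegrable 0 1)
    rw [h2]
    norm_num
  have hci : IntervalIntegrable (fun t : ℝ => μ * ‖v‖ ^ 2 * t) MeasureTheory.volume 0 1 := by
    apply Continuous.intervalIntegrable; fun_prop
  have hci2 : IntervalIntegrable (fun t : ℝ => d 0 + μ * ‖v‖ ^ 2 * t) MeasureTheory.volume 0 1 := by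
    apply Continuous.intervalIntegrable; fun_prop
  have hmono : ∫ t in (0:ℝ)..1, d t ≤ ∫ t in (0:ℝ)..1, (d 0 + μ * ‖v‖ ^ 2 * t) := by
    apply intervalIntegral.integral_mono_on (by norm_num) (hdc.intervalIntegrable 0 1)
      hci2
    intro t ht
    have h3 : d t - d 0 = ⟪gradient f (x + t • v) - gradient f x, v⟫ := by
      simp [hd, inner_sub_left]
    have h4 := real_inner_le_norm (gradient f (x + t • v) - gradient f x) v
    have h5 := hsmooth x (x + t • v)
    have h6 : ‖x + t • v - x‖ = t * ‖v‖ := by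
      simp [norm_smul, abs_of_nonneg ht.1]
    rw [h6] at h5
    nlinarith [norm_nonneg v, norm_nonneg (gradient f (x + t • v) - gradient f x)]
  have hval : ∫ t in (0:ℝ)..1, (d 0 + μ * ‖v‖ ^ 2 * t) = d 0 + μ / 2 * ‖v‖ ^ 2 := by
    rw [intervalIntegral.integral_add (intervalIntegrable_const) hci,
      intervalIntegral.integral_const_mul, integral_id]
    norm_num
    ring
  have hd0 : d 0 = ⟪gradient f x, v⟫ := by simp [hd]
  have hfin := hmono.trans_eq hval
  rw [hd0] at hfin
  linarith [hFTC]

lemma strong_pointwise (hμ : 0 < μ)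
    (hdesc : ∀ x v : EuclR n, f (x + v) ≤ f x + ⟪gradient f x, v⟫ + μ / 2 * ‖v‖ ^ 2)
    {z₁ z₂ : EuclR n}
    (h₁ : BddAbove (range fun w : EuclR n => ⟪w, z₁⟫ - f w))
    (h₂ : BddAbove (range fun w : EuclR n => ⟪w, z₂⟫ - f w))
    {t : ℝ} (ht0 : 0 ≤ t) (ht1 : t ≤ 1) (w : EuclR n) :
    ⟪w, t • z₁ + (1 - t) • z₂⟫ - f w
      ≤ t * phiConj f z₁ + (1 - t) * phiConj f z₂
        - t * (1 - t) / (2 * μ) * ‖z₁ - z₂‖ ^ 2 := by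
  set d : EuclR n := z₁ - z₂ with hdd
  set a : ℝ := (1 - t) / μ with ha
  set b : ℝ := t / μ with hb
  set w₁ : EuclR n := w + a • d with hw₁
  set w₂ : EuclR n := w + (-b) • d with hw₂
  have hc₁ : ⟪w₁, z₁⟫ - f w₁ ≤ phiConj f z₁ := le_ciSup h₁ w₁
  have hc₂ : ⟪w₂, z₂⟫ - f w₂ ≤ phiConj f z₂ := le_ciSup h₂ w₂
  have hi₁ : ⟪w₁, z₁⟫ = ⟪w, z₁⟫ + a * ⟪d, z₁⟫ := by
    rw [hw₁, inner_add_left, real_inner_smul_left]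
  have hi₂ : ⟪w₂, z₂⟫ = ⟪w, z₂⟫ - b * ⟪d, z₂⟫ := by
    rw [hw₂, inner_add_left, real_inner_smul_left]; ring
  have hn₁ : ‖a • d‖ ^ 2 = a ^ 2 * ‖d‖ ^ 2 := by
    rw [norm_smul, Real.norm_eq_abs, mul_pow, sq_abs]
  have hn₂ : ‖(-b) • d‖ ^ 2 = b ^ 2 * ‖d‖ ^ 2 := by
    rw [norm_smul, Real.norm_eq_abs, mul_pow, sq_abs]; ring
  have hf₁ : f w₁ ≤ f w + a * ⟪gradient f w, d⟫ + μ / 2 * (a ^ 2 * ‖d‖ ^ 2) := by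
    have := hdesc w (a • d)
    rw [real_inner_smul_right, hn₁] at this
    exact this
  have hf₂ : f w₂ ≤ f w - b * ⟪gradient f w, d⟫ + μ / 2 * (b ^ 2 * ‖d‖ ^ 2) := by
    have := hdesc w ((-b) • d)
    rw [real_inner_smul_right, hn₂] at this
    rw [hw₂]
    linarith
  have hL₁ : ⟪w₁, z₁⟫ - f w₁ ≥ ⟪w, z₁⟫ + a * ⟪d, z₁⟫ - (f w + a * ⟪gradient f w, d⟫ + μ / 2 * (a ^ 2 * ‖d‖ ^ 2)) := by
    rw [hi₁]; linarith
  have hL₂ : ⟪w₂, z₂⟫ - f w₂ ≥ ⟪w, z₂⟫ - b * ⟪d, z₂⟫ - (f w - b * ⟪gradient f w, d⟫ + μ / 2 * (b ^ 2 * ‖d‖ ^ 2)) := by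
    rw [hi₂]; linarith
  have hT₁ : t * (⟪w, z₁⟫ + a * ⟪d, z₁⟫ - (f w + a * ⟪gradient f w, d⟫ + μ / 2 * (a ^ 2 * ‖d‖ ^ 2)))
      ≤ t * (⟪w₁, z₁⟫ - f w₁) := mul_le_mul_of_nonneg_left hL₁ ht0
  have hT₂ : (1 - t) * (⟪w, z₂⟫ - b * ⟪d, z₂⟫ - (f w - b * ⟪gradient f w, d⟫ + μ / 2 * (b ^ 2 * ‖d‖ ^ 2)))
      ≤ (1 - t) * (⟪w₂, z₂⟫ - f w₂) := mul_le_mul_of_nonneg_left hL₂ (by linarith)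
  have hsum : t * (⟪w₁, z₁⟫ - f w₁) + (1 - t) * (⟪w₂, z₂⟫ - f w₂)
      ≤ t * phiConj f z₁ + (1 - t) * phiConj f z₂ := by
    have := mul_le_mul_of_nonneg_left hc₁ ht0
    have := mul_le_mul_of_nonneg_left hc₂ (by linarith : (0:ℝ) ≤ 1 - t)
    linarith
  have hIz : ⟪w, t • z₁ + (1 - t) • z₂⟫ = t * ⟪w, z₁⟫ + (1 - t) * ⟪w, z₂⟫ := by
    rw [inner_add_right, real_inner_smul_right, real_inner_smul_right]
  have hJ : ⟪d, z₁⟫ - ⟪d, z₂⟫ = ‖d‖ ^ 2 := by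
    rw [← inner_sub_right, ← hdd, real_inner_self_eq_norm_sq]
  have hident : t * (⟪w, z₁⟫ + a * ⟪d, z₁⟫ - (f w + a * ⟪gradient f w, d⟫ + μ / 2 * (a ^ 2 * ‖d‖ ^ 2)))
      + (1 - t) * (⟪w, z₂⟫ - b * ⟪d, z₂⟫ - (f w - b * ⟪gradient f w, d⟫ + μ / 2 * (b ^ 2 * ‖d‖ ^ 2)))
      = t * ⟪w, z₁⟫ + (1 - t) * ⟪w, z₂⟫ - f w + t * (1 - t) / (2 * μ) * ‖d‖ ^ 2 := by
    rw [← hJ, ha, hb]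
    field_simp
    ring
  rw [hIz]
  linarith [hT₁, hT₂, hsum, hident]

lemma norm_combo_sq {p : ℕ} (a b : EuclR p) (t : ℝ) :
    ‖t • a + (1 - t) • b‖ ^ 2
      = t * ‖a‖ ^ 2 + (1 - t) * ‖b‖ ^ 2 - t * (1 - t) * ‖a - b‖ ^ 2 := by
  rw [← real_inner_self_eq_norm_sq, ← real_inner_self_eq_norm_sq,
    ← real_inner_self_eq_norm_sq, ← real_inner_self_eq_norm_sq]
  simp only [inner_add_add_self, inner_sub_sub_self, real_inner_smul_left,
    real_inner_smul_right]
  rw [real_inner_comm b a]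
  ring

lemma projOn_add {p : ℕ} {K : Submodule ℝ (EuclR p)} (x y : EuclR p) :
    projOn K (x + y) = projOn K x + projOn K y := by
  simp [projOn]

lemma projOn_smul {p : ℕ} {K : Submodule ℝ (EuclR p)} (c : ℝ) (x : EuclR p) :
    projOn K (c • x) = c • projOn K x := by
  simp [projOn]

lemma projOn_sub {p : ℕ} {K : Submodule ℝ (EuclR p)} (x y : EuclR p) :
    projOn K (x - y) = projOn K x - projOn K y := by
  simp [projOn]

lemma projOn_neg {p : ℕ} {K : Submodule ℝ (EuclR p)} (x : EuclR p) :
    projOn K (-x) = - projOn K x := by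
  simp [projOn]

lemma matVec_neg {p q : ℕ} (M : Matrix (Fin p) (Fin q) ℝ) (x : EuclR q) :
    matVec M (-x) = - matVec M x := map_neg _ x

lemma combo_step {t c s u2 V Y1 Y2 pzs pzt py : ℝ}
    (hmin : pzs + c * Y2 ≤ pzt + c * (t * Y1 + (1 - t) * Y2 - t * (1 - t) * V))
    (hp : pzt ≤ t * py + (1 - t) * pzs - t * (1 - t) * s * u2) :
    t * ((pzs + c * Y2) + (1 - t) * (s * u2 + c * V)) ≤ t * (py + c * Y1) := by
  linarith

lemma projOn_zero {p : ℕ} {K : Submodule ℝ (EuclR p)} : projOn K (0 : EuclR p) = 0 := by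
  simp [projOn]

lemma proj_pythagoras {p : ℕ} {K : Submodule ℝ (EuclR p)} (x : EuclR p) :
    ‖x‖ ^ 2 = ‖projOn K x‖ ^ 2 + ‖x - projOn K x‖ ^ 2 := by
  have horth : ⟪x - projOn K x, projOn K x⟫ = 0 := by
    apply Submodule.inner_left_of_mem_orthogonal (Submodule.orthogonalProjection K x).2
    exact Submodule.sub_starProjection_mem_orthogonal (K := K) x
  have hx : x = (x - projOn K x) + projOn K x := by abel
  calc ‖x‖ ^ 2 = ‖(x - projOn K x) + projOn K x‖ ^ 2 := by rw [← hx]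
    _ = _ := by rw [norm_add_sq_real, horth]; ring

lemma norm_perp_le {p : ℕ} {K : Submodule ℝ (EuclR p)} (x : EuclR p) :
    ‖x - projOn K x‖ ≤ ‖x‖ := by
  have h := proj_pythagoras (K := K) x
  nlinarith [norm_nonneg (x - projOn K x), norm_nonneg x, sq_nonneg (‖projOn K x‖)]

lemma matVec_add {p q : ℕ} (M : Matrix (Fin p) (Fin q) ℝ) (x y : EuclR q) :
    matVec M (x + y) = matVec M x + matVec M y := map_add _ x y

lemma matVec_smul {p q : ℕ} (M : Matrix (Fin p) (Fin q) ℝ) (c : ℝ) (x : EuclR q) :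
    matVec M (c • x) = c • matVec M x := map_smul _ c x

lemma matVec_sub {p q : ℕ} (M : Matrix (Fin p) (Fin q) ℝ) (x y : EuclR q) :
    matVec M (x - y) = matVec M x - matVec M y := map_sub _ x y

lemma matVec_zero {p q : ℕ} (M : Matrix (Fin p) (Fin q) ℝ) :
    matVec M (0 : EuclR q) = 0 := map_zero _

lemma seg_limit {Fz Fy c : ℝ} (hc : 0 ≤ c)
    (h : ∀ t : ℝ, 0 < t → t < 1 → Fz + (1 - t) * c ≤ Fy) : Fz + c ≤ Fy := by
  by_contra h'
  push_neg at h'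
  have hnum : 0 < Fz + c - Fy := by linarith
  set t : ℝ := min (1/2) ((Fz + c - Fy)/(2*c+2)) with htdef
  have ht0 : 0 < t := lt_min (by norm_num) (by positivity)
  have ht1 : t < 1 := lt_of_le_of_lt (min_le_left _ _) (by norm_num)
  have h2 := h t ht0 ht1
  have h3 : t ≤ (Fz + c - Fy)/(2*c+2) := min_le_right _ _
  have h4 : t * (2*c+2) ≤ Fz + c - Fy := by
    rw [← le_div_iff₀ (by linarith : (0:ℝ) < 2*c+2)]
    exact h3
  nlinarith [mul_nonneg ht0.le hc]

lemma final_algebra {μ lam u2 v2 p2 q r Y1 Y2 W1 W2 G ip fz fy : ℝ}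
    (hμ : 0 < μ) (hlam : 0 < lam)
    (P1 : fz + 1/(2*lam)*Y2 + (1/(2*μ)*u2 + 1/(2*lam)*v2) ≤ fy + 1/(2*lam)*Y1)
    (P2 : fy + 1/(2*lam)*W1 + (1/(2*μ)*u2 + 1/(2*lam)*p2) ≤ fz + 1/(2*lam)*W2)
    (h1 : Y1 = W1 + G) (h2 : Y2 = W2 + r^2) (h3 : v2 = p2 + q^2)
    (h4 : G = r^2 + 2*ip + q^2) (h5 : ip ≤ r*q) (h6 : q^2 ≤ lam/(2*μ)*u2) :
    lam/(2*μ)*u2 + v2 ≤ q*r := by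
  have h1' : 1/(2*lam)*Y1 = 1/(2*lam)*(W1 + G) := by rw [h1]
  have h2' : 1/(2*lam)*Y2 = 1/(2*lam)*(W2 + r^2) := by rw [h2]
  have h3' : 1/(2*lam)*v2 = 1/(2*lam)*(p2 + q^2) := by rw [h3]
  have h4' : 1/(2*lam)*G = 1/(2*lam)*(r^2 + 2*ip + q^2) := by rw [h4]
  have h5' : 1/(2*lam)*ip ≤ 1/(2*lam)*(r*q) :=
    mul_le_mul_of_nonneg_left h5 (by positivity)
  have hA : 2*(1/(2*μ))*u2 + 2*(1/(2*lam))*v2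
      ≤ 2*(1/(2*lam))*(r*q) + 2*(1/(2*lam))*q^2 := by
    linarith
  have hB := mul_le_mul_of_nonneg_left hA (le_of_lt hlam)
  have e1 : lam*(2*(1/(2*μ))*u2 + 2*(1/(2*lam))*v2) = lam/μ*u2 + v2 := by
    field_simp
  have e2 : lam*(2*(1/(2*lam))*(r*q) + 2*(1/(2*lam))*q^2) = r*q + q^2 := by
    field_simp
  have e3 : lam/μ*u2 = 2*(lam/(2*μ)*u2) := by
    field_simp
  rw [e1, e2, e3] at hB
  linarith

end AuxLemmas

/-- the key intermediate inequality in the proof of the adaptive recovery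
theorem, for Δ = y* - z*. -/
theorem key_dual_inequality (n d m : ℕ) (f : EuclR n → ℝ) (μ lam : ℝ)
    (hμ : 0 < μ) (hlam : 0 < lam)
    (hconv : ConvexOn ℝ Set.univ f)
    (hdiff : ∀ x, HasGradientAt f (gradient f x) x)
    (hsmooth : ∀ x y, ‖gradient f y - gradient f x‖ ≤ μ * ‖y - x‖)
    (A : Matrix (Fin n) (Fin d) ℝ) (S : Matrix (Fin d) (Fin m) ℝ)
    (zs ys : EuclR n)
    (hzs : ∀ z, fconj f zs + ((1 / (2 * lam) * ‖matVec Aᵀ zs‖ ^ 2 : ℝ) : EReal)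
        ≤ fconj f z + ((1 / (2 * lam) * ‖matVec Aᵀ z‖ ^ 2 : ℝ) : EReal))
    (hys : ∀ y, fconj f ys + ((1 / (2 * lam) * ‖projOn (ranM S) (matVec Aᵀ ys)‖ ^ 2 : ℝ) : EReal)
        ≤ fconj f y + ((1 / (2 * lam) * ‖projOn (ranM S) (matVec Aᵀ y)‖ ^ 2 : ℝ) : EReal))
    (hcond : 2 * μ * (ZfVal f zs A S) ^ 2 ≤ lam) :
    (lam / (2 * μ)) * ‖ys - zs‖ ^ 2 + ‖matVec Aᵀ (ys - zs)‖ ^ 2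
        ≤ ‖matVec Aᵀ (ys - zs) - projOn (ranM S) (matVec Aᵀ (ys - zs))‖
            * ‖matVec Aᵀ zs - projOn (ranM S) (matVec Aᵀ zs)‖ ∧
    Real.sqrt (2 * lam / μ) * ‖matVec Aᵀ (ys - zs)‖
        ≤ ZfVal f zs A S * ‖matVec Aᵀ zs - projOn (ranM S) (matVec Aᵀ zs)‖ := by
  have hdesc : ∀ x v : EuclR n, f (x + v) ≤ f x + ⟪gradient f x, v⟫ + μ / 2 * ‖v‖ ^ 2 :=
    grad_descent hμ hdiff hsmooth
  have hsupp := grad_support hconv hdiff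
  -- finiteness of the conjugate at the gradient point
  have hg0b : ∀ w : EuclR n, ⟪w, gradient f 0⟫ - f w ≤ -f 0 := by
    intro w
    have h1 := hsupp 0 w
    rw [sub_zero, real_inner_comm] at h1
    linarith
  have hg0bdd : BddAbove (Set.range fun w : EuclR n => ⟪w, gradient f 0⟫ - f w) :=
    ⟨-f 0, by rintro - ⟨w, rfl⟩; exact hg0b w⟩
  have hg0ne : fconj f (gradient f 0) ≠ ⊤ := by
    rw [fconj_eq_coe hg0bdd]; exact EReal.coe_ne_top _
  have hzs_ne : fconj f zs ≠ ⊤ := by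
    intro htop
    have h1 := hzs (gradient f 0)
    rw [htop, EReal.top_add_coe, fconj_eq_coe hg0bdd, ← EReal.coe_add] at h1
    exact EReal.coe_ne_top _ (top_le_iff.mp h1)
  have hys_ne : fconj f ys ≠ ⊤ := by
    intro htop
    have h1 := hys (gradient f 0)
    rw [htop, EReal.top_add_coe, fconj_eq_coe hg0bdd, ← EReal.coe_add] at h1
    exact EReal.coe_ne_top _ (top_le_iff.mp h1)
  have hbzs := bddAbove_of_fconj_ne_top hzs_ne
  have hbys := bddAbove_of_fconj_ne_top hys_ne
  -- Z bound machinery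
  have hZbdd : BddAbove ((fun Δ => ‖matVec Aᵀ Δ - projOn (ranM S) (matVec Aᵀ Δ)‖) ''
      (tcone f zs ∩ Metric.closedBall 0 1)) := by
    refine ⟨‖matCLM Aᵀ‖, ?_⟩
    rintro - ⟨Δ', ⟨-, hball⟩, rfl⟩
    have h1 : ‖matVec Aᵀ Δ' - projOn (ranM S) (matVec Aᵀ Δ')‖ ≤ ‖matVec Aᵀ Δ'‖ :=
      norm_perp_le _
    have h2 : ‖matVec Aᵀ Δ'‖ ≤ ‖matCLM Aᵀ‖ * ‖Δ'‖ := (matCLM Aᵀ).le_opNorm Δ'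
    have h3 : ‖Δ'‖ ≤ 1 := by
      rwa [Metric.mem_closedBall, dist_zero_right] at hball
    have h4 : ‖matCLM Aᵀ‖ * ‖Δ'‖ ≤ ‖matCLM Aᵀ‖ * 1 :=
      mul_le_mul_of_nonneg_left h3 (norm_nonneg _)
    rw [mul_one] at h4
    linarith
  have hZ0 : 0 ≤ ZfVal f zs A S := by
    have hmem : (0 : EuclR n) ∈ tcone f zs ∩ Metric.closedBall 0 1 := by
      constructor
      · exact ⟨0, le_refl 0, gradient f 0, hg0ne, by rw [zero_smul]⟩
      · simp
    have hval : ‖matVec Aᵀ (0 : EuclR n) - projOn (ranM S) (matVec Aᵀ (0 : EuclR n))‖ = 0 := by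
      rw [matVec_zero, projOn_zero, sub_zero, norm_zero]
    have h9 : ‖matVec Aᵀ (0 : EuclR n) - projOn (ranM S) (matVec Aᵀ (0 : EuclR n))‖
        ≤ ZfVal f zs A S := le_csSup hZbdd ⟨0, hmem, rfl⟩
    rwa [hval] at h9
  have hZq : ‖matVec Aᵀ (ys - zs) - projOn (ranM S) (matVec Aᵀ (ys - zs))‖
      ≤ ZfVal f zs A S * ‖ys - zs‖ := by
    by_cases hne : ys - zs = 0
    · rw [hne, matVec_zero, projOn_zero, sub_zero, norm_zero, norm_zero, mul_zero]
    · have hnorm : (0:ℝ) < ‖ys - zs‖ := norm_pos_iff.mpr hne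
      set u : EuclR n := ‖ys - zs‖⁻¹ • (ys - zs) with hu
      have hmem : u ∈ tcone f zs ∩ Metric.closedBall 0 1 := by
        constructor
        · exact ⟨‖ys - zs‖⁻¹, inv_nonneg.mpr (norm_nonneg _), ys, hys_ne, rfl⟩
        · rw [Metric.mem_closedBall, dist_zero_right, hu, norm_smul, norm_inv, norm_norm,
            inv_mul_cancel₀ hnorm.ne']
      have hle : ‖matVec Aᵀ u - projOn (ranM S) (matVec Aᵀ u)‖ ≤ ZfVal f zs A S :=
        le_csSup hZbdd ⟨u, hmem, rfl⟩
      have hscal : matVec Aᵀ (ys - zs) - projOn (ranM S) (matVec Aᵀ (ys - zs))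
          = ‖ys - zs‖ • (matVec Aᵀ u - projOn (ranM S) (matVec Aᵀ u)) := by
        rw [smul_sub, ← matVec_smul, ← projOn_smul, ← matVec_smul, hu, smul_inv_smul₀ hnorm.ne']
      rw [hscal, norm_smul, norm_norm]
      calc ‖ys - zs‖ * ‖matVec Aᵀ u - projOn (ranM S) (matVec Aᵀ u)‖
          ≤ ‖ys - zs‖ * ZfVal f zs A S := mul_le_mul_of_nonneg_left hle (norm_nonneg _)
        _ = ZfVal f zs A S * ‖ys - zs‖ := mul_comm _ _
  -- P1 : plain problem optimality with strong convexity
  have hC₁ : (0:ℝ) ≤ 1/(2*μ) * ‖ys - zs‖^2 + 1/(2*lam) * ‖matVec Aᵀ (ys - zs)‖^2 := by positivity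
  have P1 : phiConj f zs + 1/(2*lam) * ‖matVec Aᵀ zs‖^2
      + (1/(2*μ) * ‖ys - zs‖^2 + 1/(2*lam) * ‖matVec Aᵀ (ys - zs)‖^2)
      ≤ phiConj f ys + 1/(2*lam) * ‖matVec Aᵀ ys‖^2 := by
    apply seg_limit hC₁
    intro t ht0 ht1
    have hsw := fun w => strong_pointwise hμ hdesc hbys hbzs ht0.le ht1.le w
    have hbzt : BddAbove (Set.range fun w : EuclR n => ⟪w, t • ys + (1-t) • zs⟫ - f w) :=
      ⟨_, by rintro - ⟨w, rfl⟩; exact hsw w⟩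
    have hφzt : phiConj f (t • ys + (1-t) • zs)
        ≤ t * phiConj f ys + (1-t) * phiConj f zs - t*(1-t)/(2*μ) * ‖ys - zs‖^2 :=
      ciSup_le hsw
    have hmin := hzs (t • ys + (1-t) • zs)
    rw [fconj_eq_coe hbzs, fconj_eq_coe hbzt, ← EReal.coe_add, ← EReal.coe_add,
      EReal.coe_le_coe_iff] at hmin
    have hqz : ‖matVec Aᵀ (t • ys + (1-t) • zs)‖^2
        = t * ‖matVec Aᵀ ys‖^2 + (1-t) * ‖matVec Aᵀ zs‖^2
          - t*(1-t) * ‖matVec Aᵀ (ys - zs)‖^2 := by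
      rw [matVec_add, matVec_smul, matVec_smul, norm_combo_sq, ← matVec_sub]
    rw [hqz] at hmin
    rw [show t*(1-t)/(2*μ) = t*(1-t)*(1/(2*μ)) from by ring] at hφzt
    have hstep := combo_step hmin hφzt
    have := (mul_le_mul_iff_right₀ ht0).mp hstep
    linarith
  -- P2 : sketched problem optimality with strong convexity
  have hC₂ : (0:ℝ) ≤ 1/(2*μ) * ‖ys - zs‖^2
      + 1/(2*lam) * ‖projOn (ranM S) (matVec Aᵀ (ys - zs))‖^2 := by positivity
  have P2 : phiConj f ys + 1/(2*lam) * ‖projOn (ranM S) (matVec Aᵀ ys)‖^2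
      + (1/(2*μ) * ‖ys - zs‖^2 + 1/(2*lam) * ‖projOn (ranM S) (matVec Aᵀ (ys - zs))‖^2)
      ≤ phiConj f zs + 1/(2*lam) * ‖projOn (ranM S) (matVec Aᵀ zs)‖^2 := by
    apply seg_limit hC₂
    intro t ht0 ht1
    have hsw := fun w => strong_pointwise hμ hdesc hbzs hbys ht0.le ht1.le w
    have hbzt : BddAbove (Set.range fun w : EuclR n => ⟪w, t • zs + (1-t) • ys⟫ - f w) :=
      ⟨_, by rintro - ⟨w, rfl⟩; exact hsw w⟩
    have hφzt : phiConj f (t • zs + (1-t) • ys)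
        ≤ t * phiConj f zs + (1-t) * phiConj f ys - t*(1-t)/(2*μ) * ‖zs - ys‖^2 :=
      ciSup_le hsw
    rw [norm_sub_rev] at hφzt
    have hmin := hys (t • zs + (1-t) • ys)
    rw [fconj_eq_coe hbys, fconj_eq_coe hbzt, ← EReal.coe_add, ← EReal.coe_add,
      EReal.coe_le_coe_iff] at hmin
    have hqz : ‖projOn (ranM S) (matVec Aᵀ (t • zs + (1-t) • ys))‖^2
        = t * ‖projOn (ranM S) (matVec Aᵀ zs)‖^2 + (1-t) * ‖projOn (ranM S) (matVec Aᵀ ys)‖^2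
          - t*(1-t) * ‖projOn (ranM S) (matVec Aᵀ (ys - zs))‖^2 := by
      rw [matVec_add, matVec_smul, matVec_smul, projOn_add, projOn_smul, projOn_smul,
        norm_combo_sq]
      have h7 : projOn (ranM S) (matVec Aᵀ zs) - projOn (ranM S) (matVec Aᵀ ys)
          = - projOn (ranM S) (matVec Aᵀ (ys - zs)) := by
        rw [← projOn_sub, ← matVec_sub, show zs - ys = -(ys - zs) from by abel,
          matVec_neg, projOn_neg]
      rw [h7, norm_neg]
    rw [hqz] at hmin
    rw [show t*(1-t)/(2*μ) = t*(1-t)*(1/(2*μ)) from by ring] at hφzt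
    have hstep := combo_step hmin hφzt
    have := (mul_le_mul_iff_right₀ ht0).mp hstep
    linarith
  -- Pythagorean identities and cross term
  have py_ys := proj_pythagoras (K := ranM S) (matVec Aᵀ ys)
  have py_zs := proj_pythagoras (K := ranM S) (matVec Aᵀ zs)
  have py_D := proj_pythagoras (K := ranM S) (matVec Aᵀ (ys - zs))
  have hdecomp : matVec Aᵀ ys - projOn (ranM S) (matVec Aᵀ ys)
      = (matVec Aᵀ zs - projOn (ranM S) (matVec Aᵀ zs))
        + (matVec Aᵀ (ys - zs) - projOn (ranM S) (matVec Aᵀ (ys - zs))) := by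
    rw [matVec_sub, projOn_sub]
    abel
  have hcross : ‖matVec Aᵀ ys - projOn (ranM S) (matVec Aᵀ ys)‖^2
      = ‖matVec Aᵀ zs - projOn (ranM S) (matVec Aᵀ zs)‖^2
        + 2*⟪matVec Aᵀ zs - projOn (ranM S) (matVec Aᵀ zs),
            matVec Aᵀ (ys - zs) - projOn (ranM S) (matVec Aᵀ (ys - zs))⟫
        + ‖matVec Aᵀ (ys - zs) - projOn (ranM S) (matVec Aᵀ (ys - zs))‖^2 := by
    rw [hdecomp]
    exact norm_add_sq_real _ _
  have hinner := real_inner_le_norm (matVec Aᵀ zs - projOn (ranM S) (matVec Aᵀ zs))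
      (matVec Aᵀ (ys - zs) - projOn (ranM S) (matVec Aᵀ (ys - zs)))
  have hq2 : ‖matVec Aᵀ (ys - zs) - projOn (ranM S) (matVec Aᵀ (ys - zs))‖^2
      ≤ lam/(2*μ) * ‖ys - zs‖^2 := by
    have ha := pow_le_pow_left₀ (norm_nonneg _) hZq 2
    rw [mul_pow] at ha
    have hb : (ZfVal f zs A S)^2 ≤ lam/(2*μ) := by
      rw [le_div_iff₀ (by positivity)]
      linarith [hcond]
    calc ‖matVec Aᵀ (ys - zs) - projOn (ranM S) (matVec Aᵀ (ys - zs))‖^2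
        ≤ (ZfVal f zs A S)^2 * ‖ys - zs‖^2 := ha
      _ ≤ lam/(2*μ) * ‖ys - zs‖^2 :=
        mul_le_mul_of_nonneg_right hb (sq_nonneg _)
  have goal1 : lam / (2 * μ) * ‖ys - zs‖ ^ 2 + ‖matVec Aᵀ (ys - zs)‖ ^ 2
      ≤ ‖matVec Aᵀ (ys - zs) - projOn (ranM S) (matVec Aᵀ (ys - zs))‖
          * ‖matVec Aᵀ zs - projOn (ranM S) (matVec Aᵀ zs)‖ := by
    have := final_algebra hμ hlam P1 P2 py_ys py_zs py_D hcross hinner hq2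
    linarith [this]
  refine ⟨goal1, ?_⟩
  -- second goal via AM-GM
  have hs4 : Real.sqrt (2*lam/μ) = 2 * Real.sqrt (lam/(2*μ)) := by
    rw [show 2*lam/μ = (2*Real.sqrt (lam/(2*μ)))^2 from ?_]
    · exact Real.sqrt_sq (by positivity)
    · rw [mul_pow, Real.sq_sqrt (by positivity)]
      field_simp
  have hamgm : 2*(Real.sqrt (lam/(2*μ)) * ‖ys - zs‖) * ‖matVec Aᵀ (ys - zs)‖
      ≤ lam/(2*μ)*‖ys - zs‖^2 + ‖matVec Aᵀ (ys - zs)‖^2 := by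
    have h := two_mul_le_add_sq (Real.sqrt (lam/(2*μ)) * ‖ys - zs‖) ‖matVec Aᵀ (ys - zs)‖
    rwa [mul_pow, Real.sq_sqrt (by positivity)] at h
  by_cases hd0 : ‖ys - zs‖ = 0
  · have hz : ys - zs = 0 := norm_eq_zero.mp hd0
    rw [hz, matVec_zero, norm_zero, mul_zero]
    exact mul_nonneg hZ0 (norm_nonneg _)
  · have hpos : (0:ℝ) < ‖ys - zs‖ := lt_of_le_of_ne (norm_nonneg _) (Ne.symm hd0)
    have h1 : 2*(Real.sqrt (lam/(2*μ)) * ‖ys - zs‖) * ‖matVec Aᵀ (ys - zs)‖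
        ≤ ‖matVec Aᵀ (ys - zs) - projOn (ranM S) (matVec Aᵀ (ys - zs))‖
            * ‖matVec Aᵀ zs - projOn (ranM S) (matVec Aᵀ zs)‖ :=
      le_trans hamgm goal1
    have h2 : ‖matVec Aᵀ (ys - zs) - projOn (ranM S) (matVec Aᵀ (ys - zs))‖
          * ‖matVec Aᵀ zs - projOn (ranM S) (matVec Aᵀ zs)‖
        ≤ (ZfVal f zs A S * ‖ys - zs‖)
            * ‖matVec Aᵀ zs - projOn (ranM S) (matVec Aᵀ zs)‖ :=
      mul_le_mul_of_nonneg_right hZq (norm_nonneg _)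
    have h3 : (Real.sqrt (2*lam/μ) * ‖matVec Aᵀ (ys - zs)‖) * ‖ys - zs‖
        ≤ (ZfVal f zs A S * ‖matVec Aᵀ zs - projOn (ranM S) (matVec Aᵀ zs)‖) * ‖ys - zs‖ := by
      rw [hs4]
      linarith [h1, h2]
    exact (mul_le_mul_iff_left₀ hpos).mp h3
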